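/- Let X, Z be ℝ^n-valued random variables with finite a-th moments for some a ≥ 2, with Z independent of X and E[Z] = 0. Then there exists a constant C_a depending only on a such that E|X + Z|^a ≤ E|X|^a + C_a (E[|X|^(a-2)|Z|²] + E|Z|^a). -/

import Mathlib

open MeasureTheory ProbabilityTheory


lemma momexp_one_dim (p : ℝ) (hp : 1 ≤ p) :
    ∃ K > (0:ℝ), ∀ δ : ℝ, -(1/2) ≤ δ → δ ≤ 1 →
      (1+δ) ^ p ≤ 1 + p*δ + K*δ^2 := by
  set m : ℕ := ⌈p⌉₊ with hm
  have hpm : p ≤ (m:ℝ) := Nat.le_ceil p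
  set K : ℝ := p^2 + p * m * 2^m with hKdef
  have hm1 : (1:ℝ) ≤ (m:ℝ) := le_trans hp hpm
  have hK : 0 < K := by positivity
  refine ⟨K, hK, ?_⟩
  intro δ hδ1 hδ2
  set F : ℝ → ℝ := fun t => 1 + p*t + K*t^2 - (1+t)^p with hF
  have hder : ∀ t : ℝ, -(1/2) ≤ t → t ≤ 1 →
      HasDerivAt F (p + 2*K*t - p*(1+t)^(p-1)) t := by
    intro t ht1 ht2
    have h1t : (0:ℝ) < 1 + t := by linarith
    have hrp : HasDerivAt (fun t : ℝ => (1+t)^p) (p*(1+t)^(p-1)) t := by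
      have h₂ : HasDerivAt (fun x : ℝ => x ^ p) (p * (1+t)^(p-1)) (1+t) :=
        Real.hasDerivAt_rpow_const (Or.inl (ne_of_gt h1t))
      have h₁ : HasDerivAt (fun t : ℝ => 1 + t) 1 t := (hasDerivAt_id t).const_add 1
      have := h₂.comp t h₁; rw [mul_one] at this; exact this
    have hpoly : HasDerivAt (fun t : ℝ => 1 + p*t + K*t^2) (p + 2*K*t) t := by
      have h1 : HasDerivAt (fun t : ℝ => 1 + p*t) p t := by
        simpa using ((hasDerivAt_id t).const_mul p).const_add 1
      have h2 : HasDerivAt (fun t : ℝ => K*t^2) (K*(2*t)) t := by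
        simpa using (hasDerivAt_pow 2 t).const_mul K
      have := h1.add h2
      rw [show p + 2*K*t = p + K*(2*t) by ring]; exact this
    exact hpoly.sub hrp
  -- growth bound on [0,1]
  have hmono : MonotoneOn F (Set.Icc (0:ℝ) 1) := by
    apply monotoneOn_of_deriv_nonneg (convex_Icc _ _)
    · intro t ht
      exact (hder t (by linarith [ht.1]) ht.2).continuousAt.continuousWithinAt
    · intro t ht
      rw [interior_Icc] at ht
      exact (hder t (by linarith [ht.1]) ht.2.le).differentiableAt.differentiableWithinAt
    · intro t ht
      rw [interior_Icc] at ht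
      rw [(hder t (by linarith [ht.1]) ht.2.le).deriv]
      -- need p*(1+t)^(p-1) ≤ p + 2*K*t
      have h1t : (0:ℝ) < 1 + t := by linarith [ht.1]
      have e1 : (1+t)^(p-1) ≤ (1+t)^(m:ℝ) :=
        Real.rpow_le_rpow_of_exponent_le (by linarith [ht.1]) (by linarith)
      rw [Real.rpow_natCast] at e1
      have geom : (∑ i ∈ Finset.range m, (1+t)^i) * ((1+t) - 1) = (1+t)^m - 1 :=
        geom_sum_mul (1+t) m
      have hsum : (∑ i ∈ Finset.range m, (1+t)^i) ≤ (m:ℝ) * 2^m := by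
        calc (∑ i ∈ Finset.range m, (1+t)^i) ≤ ∑ _i ∈ Finset.range m, (2:ℝ)^m := by
              apply Finset.sum_le_sum
              intro i hi
              calc (1+t)^i ≤ (2:ℝ)^i := by
                    apply pow_le_pow_left₀ (by linarith [ht.1]) (by linarith [ht.2])
                _ ≤ (2:ℝ)^m := by
                    apply pow_le_pow_right₀ (by norm_num)
                    exact (Finset.mem_range.mp hi).le
          _ = (m:ℝ) * 2^m := by
              simp [Finset.sum_const, Finset.card_range]
      have hpow : (1+t)^m ≤ 1 + (m:ℝ)*2^m*t := by
        have ht0 : 0 ≤ t := ht.1.le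
        nlinarith [hsum, geom]
      have hp0 : (0:ℝ) < p := by linarith
      have h2m : (0:ℝ) < (2:ℝ)^m := by positivity
      nlinarith [ht.1, mul_le_mul_of_nonneg_left (le_trans e1 hpow) hp0.le]
  have hanti : AntitoneOn F (Set.Icc (-(1/2):ℝ) 0) := by
    apply antitoneOn_of_deriv_nonpos (convex_Icc _ _)
    · intro t ht
      exact (hder t ht.1 (by linarith [ht.2])).continuousAt.continuousWithinAt
    · intro t ht
      rw [interior_Icc] at ht
      exact (hder t ht.1.le (by linarith [ht.2])).differentiableAt.differentiableWithinAt
    · intro t ht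
      rw [interior_Icc] at ht
      rw [(hder t ht.1.le (by linarith [ht.2])).deriv]
      -- need p + 2*K*t ≤ p*(1+t)^(p-1), t < 0
      have h1t : (0:ℝ) < 1 + t := by linarith [ht.1]
      have hp0 : (0:ℝ) < p := by linarith
      have key : 1 - (1+t)^(p-1) ≤ p * (-t) := by
        rcases le_total (p-1) 1 with hq | hq
        · have : (1+t)^(1:ℝ) ≤ (1+t)^(p-1) :=
            Real.rpow_le_rpow_of_exponent_ge h1t (by linarith [ht.2]) hq
          rw [Real.rpow_one] at this
          nlinarith [ht.2]
        · have := one_add_mul_self_le_rpow_one_add (s := t) (by linarith [ht.1]) hq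
          nlinarith [ht.2]
      have hK2 : p * p ≤ K := by
        have h0 : (0:ℝ) ≤ p * ↑m * 2^m := by positivity
        nlinarith [h0]
      nlinarith [mul_le_mul_of_nonneg_left key hp0.le, ht.2, ht.1]
  have hF0 : F 0 = 0 := by simp [hF, Real.one_rpow]
  rcases le_total δ 0 with h | h
  · have := hanti ⟨hδ1, h⟩ ⟨by norm_num, le_refl 0⟩ h
    rw [hF0] at this
    simp only [hF] at this
    linarith
  · have := hmono ⟨le_refl 0, by norm_num⟩ ⟨h, hδ2⟩ h
    rw [hF0] at this
    simp only [hF] at this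
    linarith



set_option maxHeartbeats 2000000 in
lemma momexp_scalar (a : ℝ) (ha : 2 ≤ a) :
    ∃ C > (0:ℝ), ∀ w r s I : ℝ, 0 ≤ w → 0 ≤ r → 0 ≤ s → w ≤ r + s →
      |I| ≤ r * s → w^2 = r^2 + 2*I + s^2 →
      w ^ a ≤ r ^ a + a * (r ^ (a-2) * I) + C * (r ^ (a-2) * s ^ 2 + s ^ a) := by
  obtain ⟨K, hK, hKle⟩ := momexp_one_dim (a/2) (by linarith)
  have ha0 : (0:ℝ) < a := by linarith
  obtain ⟨C, hC⟩ : ∃ C : ℝ, C = 6^a + a*5^(a-1) + a/2 + 9*K + 1 := ⟨_, rfl⟩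
  have hCpos0 : (0:ℝ) < C := by rw [hC]; positivity
  refine ⟨C, hCpos0, ?_⟩
  intro w r s I hw0 hr0 hs0 hws hinner hsq
  have hra2 : (0:ℝ) ≤ r ^ (a-2) := Real.rpow_nonneg hr0 _
  have hsa : (0:ℝ) ≤ s ^ a := Real.rpow_nonneg hs0 _
  rcases le_or_gt r (5*s) with hc | hc
  · -- case A : r ≤ 5 s
    rcases eq_or_lt_of_le hs0 with hs00 | hs00
    · -- s = 0 : then r = 0, I = 0, w = 0
      have hs0' : s = 0 := hs00.symm
      have hr0' : r = 0 := le_antisymm (by rw [hs0'] at hc; simpa using hc) hr0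
      have hI0 : I = 0 := by
        rw [hs0', hr0'] at hinner; simpa using abs_eq_zero.mp (le_antisymm (by simpa using hinner) (abs_nonneg I))
      have hw0' : w = 0 := by
        rw [hs0', hr0', hI0] at hsq
        nlinarith [hsq]
      rw [hw0', hr0', hs0', hI0]
      have h0a : (0:ℝ) ^ a = 0 := Real.zero_rpow (ne_of_gt ha0)
      rw [h0a]
      have hC0 : 0 < C := by rw [hC]; positivity
      have h2' : (0:ℝ) ≤ (0:ℝ)^(a-2) := Real.rpow_nonneg le_rfl _
      have h3' : ((0:ℝ):ℝ)^(2:ℕ) = 0 := by norm_num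
      have := mul_nonneg hC0.le (by nlinarith [h2'] : (0:ℝ) ≤ (0:ℝ)^(a-2)*(0:ℝ)^(2:ℕ) + 0)
      nlinarith [this]
    · -- s > 0
      have h1 : w ^ a ≤ 6^a * s^a := by
        calc w ^ a ≤ (6*s) ^ a := by
              apply Real.rpow_le_rpow hw0 _ ha0.le
              linarith
          _ = 6^a * s^a := Real.mul_rpow (by norm_num) hs0
      have h5s : (0:ℝ) < 5*s := by linarith
      have h2 : r ^ (a-2) * r ≤ 5^(a-1) * s^(a-1) := by
        calc r ^ (a-2) * r ≤ (5*s)^(a-2) * (5*s) := by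
              apply mul_le_mul (Real.rpow_le_rpow hr0 hc (by linarith)) hc hr0
                (Real.rpow_nonneg h5s.le _)
          _ = (5*s)^(a-1) := by
              rw [← Real.rpow_add_one (ne_of_gt h5s) (a-2)]
              congr 1; ring
          _ = 5^(a-1) * s^(a-1) := Real.mul_rpow (by norm_num) hs0
      have h3 : s^(a-1) * s = s^a := by
        rw [← Real.rpow_add_one (ne_of_gt hs00) (a-1)]
        congr 1; ring
      have hmid : -(a * (5^(a-1) * s^a)) ≤ a * (r ^ (a-2) * I) := by
        have hi1 : -(r*s) ≤ I := neg_le_of_abs_le hinner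
        have h5' : -(r^(a-2) * (r*s)) ≤ r^(a-2) * I := by
          nlinarith [mul_le_mul_of_nonneg_left hi1 hra2]
        have h4 : r^(a-2) * (r*s) ≤ 5^(a-1) * s^a := by
          calc r^(a-2) * (r*s) = (r^(a-2) * r) * s := by ring
            _ ≤ (5^(a-1) * s^(a-1)) * s := mul_le_mul_of_nonneg_right h2 hs0
            _ = 5^(a-1) * s^a := by rw [mul_assoc, h3]
        nlinarith [mul_le_mul_of_nonneg_left h4 ha0.le]
      have hr_a : (0:ℝ) ≤ r ^ a := Real.rpow_nonneg hr0 _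
      have hprod : (0:ℝ) ≤ r ^ (a-2) * s^2 := by positivity
      have h5a : (0:ℝ) < (5:ℝ)^(a-1) := Real.rpow_pos_of_pos (by norm_num) _
      have h6a : (0:ℝ) < (6:ℝ)^a := Real.rpow_pos_of_pos (by norm_num) _
      have hCpos : (0:ℝ) < C := by rw [hC]; positivity
      have t1 : C * (r^(a-2)*s^2 + s^a) = C*(r^(a-2)*s^2) + C*s^a := by ring
      have t2 : (0:ℝ) ≤ C*(r^(a-2)*s^2) := mul_nonneg hCpos.le hprod
      have t3 : (6^a + a*5^(a-1))*s^a ≤ C*s^a := by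
        apply mul_le_mul_of_nonneg_right _ hsa
        rw [hC]; linarith [hK, ha0]
      have t4 : (6^a + a*5^(a-1))*s^a = 6^a*s^a + a*(5^(a-1)*s^a) := by ring
      linarith [h1, hmid, hr_a, t1, t2, t3, t4]
  · -- case B : 5 s < r
    have hrpos : (0:ℝ) < r := by linarith
    have hr2 : (0:ℝ) < r^2 := by positivity
    obtain ⟨D, hD⟩ : ∃ D : ℝ, D = 2*I + s^2 := ⟨_, rfl⟩
    have hDabs : |D| ≤ 3*r*s := by
      have h1 : s^2 ≤ r*s := by
        have h1' : s*s ≤ r*s := mul_le_mul_of_nonneg_right (by linarith : s ≤ r) hs0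
        calc s^2 = s*s := sq s
          _ ≤ r*s := h1'
      have h2 : |D| ≤ 2*|I| + s^2 := by
        calc |D| = |2*I + s^2| := by rw [hD]
          _ ≤ |2*I| + |s^2| := abs_add_le _ _
          _ = 2*|I| + s^2 := by
              rw [abs_mul, abs_of_nonneg (by positivity : (0:ℝ) ≤ s^2)]; norm_num
      linarith [hinner, h2, h1]
    have hDabs2 : |D| ≤ 2*r*s + s^2 := by
      have h2 : |D| ≤ 2*|I| + s^2 := by
        calc |D| = |2*I + s^2| := by rw [hD]
          _ ≤ |2*I| + |s^2| := abs_add_le _ _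
          _ = 2*|I| + s^2 := by
              rw [abs_mul, abs_of_nonneg (by positivity : (0:ℝ) ≤ s^2)]; norm_num
      linarith [hinner, h2]
    have hDr2 : |D| ≤ (1/2) * r^2 := by
      have hs5 : s ≤ r/5 := by linarith
      have b1 : 2*r*s ≤ (2/5)*r^2 := by
        have := mul_le_mul_of_nonneg_left hs5 hrpos.le
        have hrr : r*r = r^2 := (sq r).symm
        linarith [this]
      have b2 : s^2 ≤ (1/25)*r^2 := by
        have := pow_le_pow_left₀ hs0 hs5 2
        have h25 : (r/5)^2 = (1/25)*r^2 := by ring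
        linarith [this]
      linarith [hDabs2]
    obtain ⟨δ, hδ⟩ : ∃ δ : ℝ, δ = D / r^2 := ⟨_, rfl⟩
    have hδabs : |δ| ≤ 1/2 := by
      rw [hδ, abs_div, abs_of_pos hr2, div_le_iff₀ hr2]
      linarith [hDr2]
    have hδ1 : -(1/2) ≤ δ := neg_le_of_abs_le hδabs
    have hδ2 : δ ≤ 1 := by linarith [le_of_abs_le hδabs]
    have hnormsq : w^2 = r^2 * (1 + δ) := by
      have h' : r^2 * (1 + δ) = r^2 + D := by
        rw [hδ, mul_add, mul_div_cancel₀ _ hr2.ne', mul_one]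
      rw [h', hsq, hD]; ring
    have e1 : (w^2:ℝ)^(a/2) = w^a := by
      rw [← Real.rpow_natCast w 2, ← Real.rpow_mul hw0]
      congr 1; push_cast; ring
    have e2 : ((r:ℝ)^2)^(a/2) = r^a := by
      rw [← Real.rpow_natCast r 2, ← Real.rpow_mul hr0]
      congr 1; push_cast; ring
    have h1δ : (0:ℝ) ≤ 1 + δ := by linarith
    have key : w^a = r^a * (1+δ)^(a/2) := by
      rw [← e1, hnormsq, Real.mul_rpow (by positivity) h1δ, e2]
    have hbound : (1+δ)^(a/2) ≤ 1 + (a/2)*δ + K*δ^2 := hKle δ hδ1 hδ2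
    have hra : r^a = r^(a-2) * r^2 := by
      rw [← Real.rpow_natCast r 2, ← Real.rpow_add hrpos]
      congr 1; push_cast; ring
    have hr2δ : r^2 * δ = D := by
      rw [hδ]; field_simp
    have hr2δ2 : r^2 * δ^2 ≤ 9 * s^2 := by
      have hD2 : D^2 ≤ 9*r^2*s^2 := by
        have h1' : |D| * |D| ≤ (3*r*s)*(3*r*s) := mul_self_le_mul_self (abs_nonneg D) hDabs
        have h2' : D^2 = |D| * |D| := by rw [← sq_abs D]; ring
        linarith [h1', h2']
      have h' : r^2 * δ^2 = D^2 / r^2 := by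
        rw [hδ]; field_simp
      rw [h', div_le_iff₀ hr2]
      linarith [hD2]
    have hmain : w^a ≤ r^a + (a/2)*(r^(a-2)*D) + 9*K*(r^(a-2)*s^2) := by
      rw [key]
      have step : r^a * (1+δ)^(a/2) ≤ r^a * (1 + (a/2)*δ + K*δ^2) :=
        mul_le_mul_of_nonneg_left hbound (Real.rpow_nonneg hr0 _)
      have expand : r^a * (1 + (a/2)*δ + K*δ^2)
          = r^a + (a/2)*(r^(a-2)*(r^2*δ)) + K*(r^(a-2)*(r^2*δ^2)) := by
        rw [hra]; ring
      rw [expand, hr2δ] at step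
      have h' : K*(r^(a-2)*(r^2*δ^2)) ≤ 9*K*(r^(a-2)*s^2) := by
        have h1' := mul_le_mul_of_nonneg_left hr2δ2 hra2
        have h2' := mul_le_mul_of_nonneg_left h1' hK.le
        linarith [h2']
      linarith
    have hfin : r^a + (a/2)*(r^(a-2)*D) + 9*K*(r^(a-2)*s^2)
        = r^a + a*(r^(a-2)*I) + (a/2 + 9*K)*(r^(a-2)*s^2) := by
      rw [hD]; ring
    rw [hfin] at hmain
    have hprod : (0:ℝ) ≤ r ^ (a-2) * s^2 := by positivity
    have hCpos : (0:ℝ) < C := by rw [hC]; positivity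
    have u1 : (a/2 + 9*K)*(r^(a-2)*s^2) ≤ C*(r^(a-2)*s^2) := by
      apply mul_le_mul_of_nonneg_right _ hprod
      rw [hC]
      have h5a : (0:ℝ) < (5:ℝ)^(a-1) := Real.rpow_pos_of_pos (by norm_num) _
      have h6a : (0:ℝ) < (6:ℝ)^a := Real.rpow_pos_of_pos (by norm_num) _
      linarith [h6a, mul_pos ha0 h5a]
    have u2 : (0:ℝ) ≤ C*s^a := mul_nonneg hCpos.le hsa
    have u3 : C*(r^(a-2)*s^2 + s^a) = C*(r^(a-2)*s^2) + C*s^a := by ring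
    linarith [hmain, u1, u2, u3]

lemma momexp_pointwise (a : ℝ) (ha : 2 ≤ a) :
    ∃ C > (0:ℝ), ∀ (n : ℕ) (x z : EuclideanSpace ℝ (Fin n)),
      ‖x + z‖ ^ a ≤ ‖x‖ ^ a + a * (‖x‖ ^ (a-2) * (inner ℝ x z : ℝ))
        + C * (‖x‖ ^ (a-2) * ‖z‖ ^ 2 + ‖z‖ ^ a) := by
  obtain ⟨C, hC, hCle⟩ := momexp_scalar a ha
  refine ⟨C, hC, ?_⟩
  intro n x z
  exact hCle ‖x + z‖ ‖x‖ ‖z‖ (inner ℝ x z : ℝ) (norm_nonneg _) (norm_nonneg _)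
    (norm_nonneg _) (norm_add_le x z) (abs_real_inner_le_norm x z)
    (norm_add_sq_real x z)

open MeasureTheory ProbabilityTheory


set_option maxHeartbeats 1000000 in
/-- for `a ≥ 2` there is `C_a > 0` depending only on `a` such that for any
`ℝⁿ`-valued random variables `X, Z` with finite `a`-th moments, `Z` independent of `X` and
`E[Z] = 0`, `E‖X+Z‖^a ≤ E‖X‖^a + C_a (E[‖X‖^(a-2)‖Z‖²] + E‖Z‖^a)`. -/
theorem moment_expansion_bound :
    ∀ a : ℝ, 2 ≤ a → ∃ C > (0 : ℝ),
      ∀ (n : ℕ) (Ω : Type) (_ : MeasurableSpace Ω) (P : Measure Ω),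
        IsProbabilityMeasure P →
      ∀ X Z : Ω → EuclideanSpace ℝ (Fin n), Measurable X → Measurable Z →
        Integrable (fun ω => ‖X ω‖ ^ a) P →
        Integrable (fun ω => ‖Z ω‖ ^ a) P →
        IndepFun X Z P →
        (∫ ω, Z ω ∂P = 0) →
        ∫ ω, ‖X ω + Z ω‖ ^ a ∂P
          ≤ ∫ ω, ‖X ω‖ ^ a ∂P
            + C * ((∫ ω, ‖X ω‖ ^ (a - 2) * ‖Z ω‖ ^ 2 ∂P) + ∫ ω, ‖Z ω‖ ^ a ∂P) := by
  intro a ha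
  obtain ⟨C, hC, hpt⟩ := momexp_pointwise a ha
  refine ⟨C, hC, ?_⟩
  intro n Ω mΩ P hP X Z hX hZ hXa hZa hindep hZmean
  have ha0 : (0:ℝ) < a := by linarith
  have ha2 : (0:ℝ) ≤ a - 2 := by linarith
  have cont2 : Continuous (fun t : ℝ => t ^ (a-2)) := Real.continuous_rpow_const ha2
  -- basic bound
  have hb : ∀ b : ℝ, 0 ≤ b → b ≤ a → ∀ t : ℝ, 0 ≤ t → t ^ b ≤ 1 + t ^ a := by
    intro b hb0 hba t ht
    rcases le_total t 1 with h1 | h1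
    · have := Real.rpow_le_one ht h1 hb0
      have := Real.rpow_nonneg ht a
      linarith
    · have := Real.rpow_le_rpow_of_exponent_le h1 hba
      linarith
  have hb2 : ∀ t : ℝ, 0 ≤ t → t ^ (a-2) * t ≤ 1 + t ^ a := by
    intro t ht
    rcases le_total t 1 with h1 | h1
    · have h2 := Real.rpow_le_one ht h1 ha2
      have h3 := Real.rpow_nonneg ht a
      nlinarith [Real.rpow_nonneg ht (a-2)]
    · have ht0 : (0:ℝ) < t := lt_of_lt_of_le one_pos h1
      have : t ^ (a-2) * t = t ^ (a-1) := by
        rw [← Real.rpow_add_one (ne_of_gt ht0)]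
        congr 1; ring
      rw [this]
      have := Real.rpow_le_rpow_of_exponent_le h1 (by linarith : a - 1 ≤ a)
      linarith
  have int_one : Integrable (fun _ : Ω => (1:ℝ)) P := integrable_const 1
  -- integrability of ‖X‖^(a-2)
  have hXa2 : Integrable (fun ω => ‖X ω‖ ^ (a-2)) P := by
    have hmeas : Measurable fun ω => ‖X ω‖ ^ (a-2) := cont2.measurable.comp hX.norm
    apply Integrable.mono' (int_one.add hXa) hmeas.aestronglyMeasurable
    filter_upwards with ω
    simp only [Pi.add_apply]
    rw [Real.norm_eq_abs, abs_of_nonneg (Real.rpow_nonneg (norm_nonneg _) _)]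
    exact hb _ ha2 (by linarith) _ (norm_nonneg _)
  -- integrability of ‖Z‖^2
  have hZ2 : Integrable (fun ω => ‖Z ω‖ ^ (2:ℕ)) P := by
    apply Integrable.mono' (int_one.add hZa) ((hZ.norm.pow_const 2).aestronglyMeasurable)
    filter_upwards with ω
    rw [Real.norm_eq_abs, abs_of_nonneg (by positivity)]
    have : ‖Z ω‖ ^ (2:ℕ) = ‖Z ω‖ ^ ((2:ℕ):ℝ) := (Real.rpow_natCast _ 2).symm
    rw [this]
    exact hb 2 (by norm_num) (by push_cast; linarith) _ (norm_nonneg _)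
  -- integrability of the product
  have hprodInt : Integrable (fun ω => ‖X ω‖ ^ (a-2) * ‖Z ω‖ ^ (2:ℕ)) P := by
    have hIF : IndepFun (fun ω => ‖X ω‖ ^ (a-2)) (fun ω => ‖Z ω‖ ^ (2:ℕ)) P := by
      have := hindep.comp (φ := fun v : EuclideanSpace ℝ (Fin n) => ‖v‖ ^ (a-2))
        (ψ := fun v : EuclideanSpace ℝ (Fin n) => ‖v‖ ^ (2:ℕ))
        (cont2.measurable.comp measurable_norm) (measurable_norm.pow_const 2)
      exact this
    exact hIF.integrable_mul hXa2 hZ2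
  -- integrability of Z
  have hZInt : Integrable Z P := by
    apply Integrable.mono' (int_one.add hZa) hZ.aestronglyMeasurable
    filter_upwards with ω
    simp only [Pi.add_apply]
    have h1 := hb 1 (by norm_num) (by linarith) ‖Z ω‖ (norm_nonneg _)
    rw [Real.rpow_one] at h1
    exact h1
  -- coordinate bound
  have coord : ∀ (v : EuclideanSpace ℝ (Fin n)) (i : Fin n), |v i| ≤ ‖v‖ := by
    intro v i
    rw [EuclideanSpace.norm_eq, ← Real.sqrt_sq_eq_abs]
    apply Real.sqrt_le_sqrt
    have : |v i| ^ 2 ≤ ∑ j, ‖v j‖ ^ 2 := by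
      have := Finset.single_le_sum (f := fun j => ‖v j‖ ^ 2)
        (fun j _ => by positivity) (Finset.mem_univ i)
      simpa [Real.norm_eq_abs] using this
    simpa [sq_abs] using this
  -- per-coordinate data
  have hXi_int : ∀ i : Fin n, Integrable (fun ω => ‖X ω‖ ^ (a-2) * X ω i) P := by
    intro i
    have hmeas : Measurable fun ω => ‖X ω‖ ^ (a-2) * X ω i :=
      (cont2.measurable.comp hX.norm).mul ((EuclideanSpace.proj (𝕜 := ℝ) i).measurable.comp hX)
    apply Integrable.mono' (int_one.add hXa) hmeas.aestronglyMeasurable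
    filter_upwards with ω
    rw [Real.norm_eq_abs, abs_mul, abs_of_nonneg (Real.rpow_nonneg (norm_nonneg _) _)]
    calc ‖X ω‖ ^ (a-2) * |X ω i| ≤ ‖X ω‖ ^ (a-2) * ‖X ω‖ :=
          mul_le_mul_of_nonneg_left (coord _ i) (Real.rpow_nonneg (norm_nonneg _) _)
      _ ≤ 1 + ‖X ω‖ ^ a := hb2 _ (norm_nonneg _)
  have hZi_int : ∀ i : Fin n, Integrable (fun ω => Z ω i) P := by
    intro i
    apply Integrable.mono' (int_one.add hZa)
      (((EuclideanSpace.proj (𝕜 := ℝ) i).measurable.comp hZ).aestronglyMeasurable)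
    filter_upwards with ω
    rw [Real.norm_eq_abs]
    calc |Z ω i| ≤ ‖Z ω‖ := coord _ i
      _ ≤ 1 + ‖Z ω‖ ^ a := by
          have h1 := hb 1 (by norm_num) (by linarith) ‖Z ω‖ (norm_nonneg _)
          rw [Real.rpow_one] at h1
          exact h1
  have hWZi_indep : ∀ i : Fin n,
      IndepFun (fun ω => ‖X ω‖ ^ (a-2) * X ω i) (fun ω => Z ω i) P := by
    intro i
    have := hindep.comp (φ := fun v : EuclideanSpace ℝ (Fin n) => ‖v‖ ^ (a-2) * v i)
      (ψ := fun v : EuclideanSpace ℝ (Fin n) => v i)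
      ((cont2.measurable.comp measurable_norm).mul (EuclideanSpace.proj (𝕜 := ℝ) i).measurable)
      (EuclideanSpace.proj (𝕜 := ℝ) i).measurable
    exact this
  have hWZi_int : ∀ i : Fin n,
      Integrable (fun ω => (‖X ω‖ ^ (a-2) * X ω i) * Z ω i) P := by
    intro i
    exact (hWZi_indep i).integrable_mul (hXi_int i) (hZi_int i)
  have hZi_zero : ∀ i : Fin n, ∫ ω, Z ω i ∂P = 0 := by
    intro i
    have h := (EuclideanSpace.proj (𝕜 := ℝ) i).integral_comp_comm hZInt
    rw [hZmean] at h
    simpa using h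
  have hWZi_zero : ∀ i : Fin n,
      ∫ ω, (‖X ω‖ ^ (a-2) * X ω i) * Z ω i ∂P = 0 := by
    intro i
    have h := (hWZi_indep i).integral_fun_mul_eq_mul_integral (hXi_int i).aestronglyMeasurable (hZi_int i).aestronglyMeasurable
    calc ∫ ω, (‖X ω‖ ^ (a-2) * X ω i) * Z ω i ∂P
        = (∫ ω, ‖X ω‖ ^ (a-2) * X ω i ∂P) * ∫ ω, Z ω i ∂P := h
      _ = 0 := by rw [hZi_zero i, mul_zero]
  -- the middle term
  have hinner_rw : ∀ ω, (inner ℝ (X ω) (Z ω) : ℝ) = ∑ i, X ω i * Z ω i := by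
    intro ω
    rw [PiLp.inner_apply]
    simp [RCLike.inner_apply, mul_comm]
  have hM_eq : (fun ω => a * (‖X ω‖ ^ (a-2) * (inner ℝ (X ω) (Z ω) : ℝ)))
      = fun ω => a * ∑ i, (‖X ω‖ ^ (a-2) * X ω i) * Z ω i := by
    funext ω
    rw [hinner_rw ω, Finset.mul_sum]
    congr 1
    apply Finset.sum_congr rfl
    intro i _
    ring
  have hM_int : Integrable (fun ω => a * (‖X ω‖ ^ (a-2) * (inner ℝ (X ω) (Z ω) : ℝ))) P := by
    rw [hM_eq]
    exact (integrable_finset_sum _ (fun i _ => hWZi_int i)).const_mul a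
  have hM_zero : ∫ ω, a * (‖X ω‖ ^ (a-2) * (inner ℝ (X ω) (Z ω) : ℝ)) ∂P = 0 := by
    rw [hM_eq]
    rw [integral_const_mul]
    rw [integral_finset_sum _ (fun i _ => hWZi_int i)]
    simp [hWZi_zero]
  -- main comparison
  have hGint : Integrable (fun ω => ‖X ω‖ ^ a
      + a * (‖X ω‖ ^ (a-2) * (inner ℝ (X ω) (Z ω) : ℝ))
      + C * (‖X ω‖ ^ (a-2) * ‖Z ω‖ ^ (2:ℕ) + ‖Z ω‖ ^ a)) P :=
    (hXa.add hM_int).add ((hprodInt.add hZa).const_mul C)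
  have hmono := integral_mono_of_nonneg
    (f := fun ω => ‖X ω + Z ω‖ ^ a)
    (Filter.Eventually.of_forall (fun ω => Real.rpow_nonneg (norm_nonneg _) _))
    hGint
    (Filter.Eventually.of_forall (fun ω => hpt n (X ω) (Z ω)))
  have I1 : Integrable (fun ω => ‖X ω‖ ^ a
      + a * (‖X ω‖ ^ (a-2) * (inner ℝ (X ω) (Z ω) : ℝ))) P := hXa.add hM_int
  have I2 : Integrable (fun ω => C * (‖X ω‖ ^ (a-2) * ‖Z ω‖ ^ (2:ℕ) + ‖Z ω‖ ^ a)) P :=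
    (hprodInt.add hZa).const_mul C
  rw [integral_add I1 I2, integral_add hXa hM_int, hM_zero, add_zero,
    integral_const_mul, integral_add hprodInt hZa] at hmono
  simpa using hmono
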